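/- arXiv:0808.2163 — 3 statements merged into one kernel-verified Lean document; each statement's English description precedes it below -/
import Mathlib

section
/- Pointwise identity underlying the relativistic IMS localisation formula: Let (M, μ) be a measure space and let g, h ∈ L²(μ) be real-valued with ∫ g(u)² dμ(u) = 1 and ∫ h(u)² dμ(u) = 1. Then for all complex numbers a, b: ∫_M |g(u) a − h(u) b|² dμ(u) = |a − b|² + (∫_M (g(u) − h(u))² dμ(u)) · Re(a · conj(b)). (Applied with g(u) = θ_u(x), h(u) = θ_u(y), a = f(x), b = f(y) for a family (θ_u) with ∫ θ_u(x)² dμ(u) = 1 for all x, this gives the relativistic IMS formula.) -/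
open MeasureTheory

/-- Pointwise identity underlying the relativistic IMS localisation formula:
if `g, h ∈ L²(μ)` are real-valued with `∫ g² dμ = 1 = ∫ h² dμ`, then for all `a b : ℂ`,
`∫ |g(u) a − h(u) b|² dμ(u) = |a − b|² + (∫ (g−h)² dμ) · Re(a · conj b)`. -/
theorem IMS_pointwise_identity {M : Type*} [MeasurableSpace M] (μ : Measure M)
    (g h : M → ℝ) (hg : MemLp g 2 μ) (hh : MemLp h 2 μ)
    (hg1 : ∫ u, (g u) ^ 2 ∂μ = 1) (hh1 : ∫ u, (h u) ^ 2 ∂μ = 1) (a b : ℂ) :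
    ∫ u, ‖(g u : ℂ) * a - (h u : ℂ) * b‖ ^ 2 ∂μ
      = ‖a - b‖ ^ 2 + (∫ u, (g u - h u) ^ 2 ∂μ) * (a * (starRingEnd ℂ) b).re := by
  set R : ℝ := (a * (starRingEnd ℂ) b).re with hR
  have hkey : ∀ u, ‖(g u : ℂ) * a - (h u : ℂ) * b‖ ^ 2
      = (g u) ^ 2 * (‖a‖ ^ 2 - R) + (h u) ^ 2 * (‖b‖ ^ 2 - R) + (g u - h u) ^ 2 * R := by
    intro u
    have h1 : ‖(g u : ℂ) * a - (h u : ℂ) * b‖ ^ 2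
        = Complex.normSq ((g u : ℂ) * a) + Complex.normSq ((h u : ℂ) * b)
          - 2 * (((g u : ℂ) * a) * (starRingEnd ℂ) ((h u : ℂ) * b)).re := by
      rw [Complex.sq_norm, Complex.normSq_sub]
    rw [h1]
    have hn : ∀ z : ℂ, ‖z‖ ^ 2 = Complex.normSq z := fun z => by
      rw [Complex.sq_norm]
    have h2 : Complex.normSq ((g u : ℂ) * a) = (g u) ^ 2 * ‖a‖ ^ 2 := by
      rw [Complex.normSq_mul, Complex.normSq_ofReal, hn]; ring
    have h3 : Complex.normSq ((h u : ℂ) * b) = (h u) ^ 2 * ‖b‖ ^ 2 := by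
      rw [Complex.normSq_mul, Complex.normSq_ofReal, hn]; ring
    have h4 : (((g u : ℂ) * a) * (starRingEnd ℂ) ((h u : ℂ) * b)).re = g u * h u * R := by
      rw [map_mul, Complex.conj_ofReal]
      have : (g u : ℂ) * a * ((h u : ℂ) * (starRingEnd ℂ) b)
          = ((g u * h u : ℝ) : ℂ) * (a * (starRingEnd ℂ) b) := by push_cast; ring
      rw [this, Complex.re_ofReal_mul]
    rw [h2, h3, h4]; ring
  have hgsq : Integrable (fun u => (g u) ^ 2) μ := hg.integrable_sq
  have hhsq : Integrable (fun u => (h u) ^ 2) μ := hh.integrable_sq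
  have hghsq : Integrable (fun u => (g u - h u) ^ 2) μ := (hg.sub hh).integrable_sq
  calc ∫ u, ‖(g u : ℂ) * a - (h u : ℂ) * b‖ ^ 2 ∂μ
      = ∫ u, ((g u) ^ 2 * (‖a‖ ^ 2 - R) + (h u) ^ 2 * (‖b‖ ^ 2 - R) + (g u - h u) ^ 2 * R) ∂μ := by
        exact integral_congr_ae (Filter.Eventually.of_forall hkey)
    _ = (∫ u, (g u) ^ 2 ∂μ) * (‖a‖ ^ 2 - R) + (∫ u, (h u) ^ 2 ∂μ) * (‖b‖ ^ 2 - R)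
        + (∫ u, (g u - h u) ^ 2 ∂μ) * R := by
        have hA : Integrable (fun u => (g u) ^ 2 * (‖a‖ ^ 2 - R) + (h u) ^ 2 * (‖b‖ ^ 2 - R)) μ :=
          (hgsq.mul_const _).add (hhsq.mul_const _)
        rw [integral_add hA (hghsq.mul_const _),
          integral_add (hgsq.mul_const _) (hhsq.mul_const _),
          integral_mul_const, integral_mul_const, integral_mul_const]
    _ = ‖a - b‖ ^ 2 + (∫ u, (g u - h u) ^ 2 ∂μ) * R := by
        rw [hg1, hh1]
        have hn : ∀ z : ℂ, ‖z‖ ^ 2 = Complex.normSq z := fun z => by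
          rw [Complex.sq_norm]
        have : ‖a - b‖ ^ 2 = ‖a‖ ^ 2 + ‖b‖ ^ 2 - 2 * R := by
          rw [hn, hn, hn, Complex.normSq_sub, hR]
        rw [this]; ring
end

section
/- Localisation error trace estimate: Define K₂(t) = t ∫_0^∞ e^{−t√(s²+1)} s² ds for t > 0. There exists a universal constant C > 0 such that for every m > 0, every ℓ > 0 and every measurable set Ω ⊆ ℝ³ of finite Lebesgue measure |Ω|: ∫_{ℝ³∖Ω} ∫_Ω 1_{\{|x−y| > ℓ\}} K₂(m|x−y|)² dy dx ≤ C m^{-4} ℓ^{-1} e^{−mℓ} |Ω|. -/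
open MeasureTheory
open scoped ENNReal

/-- The modified Bessel function of the second kind of order two,
`K₂(t) = t ∫_0^∞ e^{−t √(s²+1)} s² ds` for `t > 0`. -/
noncomputable def K2 (t : ℝ) : ℝ :=
  t * ∫ s in Set.Ioi (0 : ℝ), Real.exp (-(t * Real.sqrt (s ^ 2 + 1))) * s ^ 2

section Aux
open Set Real Metric
open scoped ENNReal

local notation "E3" => EuclideanSpace ℝ (Fin 3)

lemma K2_nonneg {t : ℝ} (ht : 0 < t) : 0 ≤ K2 t := by
  apply mul_nonneg ht.le
  apply integral_nonneg
  intro s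
  positivity

lemma majorant_integrable {b : ℝ} (hb : 0 < b) :
    IntegrableOn (fun s : ℝ => s ^ 2 * Real.exp (-(b * s))) (Ioi 0) := by
  have := integrableOn_rpow_mul_exp_neg_mul_rpow (p := 1) (s := 2) (b := b)
    (by norm_num) one_pos hb
  refine this.congr_fun (fun s hs => ?_) measurableSet_Ioi
  beta_reduce
  rw [Real.rpow_one, Real.rpow_two, neg_mul]

lemma majorant_integral {b : ℝ} (hb : 0 < b) :
    ∫ s in Ioi (0:ℝ), s ^ 2 * Real.exp (-(b * s)) = 2 / b ^ 3 := by
  have := Real.integral_rpow_mul_exp_neg_mul_Ioi (a := 3) (r := b) (by norm_num) hb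
  have h2 : ∀ s ∈ Ioi (0:ℝ), s ^ ((3:ℝ) - 1) * Real.exp (-(b * s))
      = s ^ 2 * Real.exp (-(b * s)) := by
    intro s hs
    norm_num [Real.rpow_two]
  rw [setIntegral_congr_fun measurableSet_Ioi h2] at this
  have hg : Real.Gamma 3 = 2 := by
    rw [(by norm_num : (3:ℝ) = (2:ℕ)+1), Real.Gamma_nat_eq_factorial]; norm_num
  rw [this, hg, show ((1:ℝ)/b) ^ (3:ℝ) = ((1:ℝ)/b)^(3:ℕ) from by
    rw [← Real.rpow_natCast]; norm_num]
  rw [div_pow, one_pow, div_mul_eq_mul_div, div_eq_div_iff (by positivity) (by positivity)]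
  ring

lemma K2_le {t : ℝ} (ht : 0 < t) : K2 t ≤ 16 * t⁻¹ ^ 2 * Real.exp (-(t / 2)) := by
  have hI : (∫ s in Ioi (0:ℝ), Real.exp (-(t * Real.sqrt (s ^ 2 + 1))) * s ^ 2)
      ≤ Real.exp (-(t/2)) * (2 / (t/2) ^ 3) := by
    rw [← majorant_integral (half_pos ht), ← integral_const_mul]
    apply integral_mono_of_nonneg
    · filter_upwards with s; positivity
    · exact (majorant_integrable (half_pos ht)).const_mul _
    · filter_upwards [ae_restrict_mem measurableSet_Ioi] with s hs
      have h1 : (1 + s) / 2 ≤ Real.sqrt (s ^ 2 + 1) := by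
        have hs1 : Real.sqrt 1 ≤ Real.sqrt (s ^ 2 + 1) := Real.sqrt_le_sqrt (by nlinarith)
        rw [Real.sqrt_one] at hs1
        have hs2 : s ≤ Real.sqrt (s ^ 2 + 1) := by
          refine le_trans ?_ (Real.sqrt_le_sqrt (show s^2 ≤ s^2+1 by linarith))
          rw [Real.sqrt_sq_eq_abs]; exact le_abs_self s
        linarith
      calc Real.exp (-(t * Real.sqrt (s ^ 2 + 1))) * s ^ 2
          ≤ Real.exp (-(t * ((1 + s)/2))) * s ^ 2 := by
            apply mul_le_mul_of_nonneg_right _ (by positivity)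
            apply Real.exp_le_exp.2
            have := mul_le_mul_of_nonneg_left h1 ht.le
            linarith
        _ = Real.exp (-(t/2)) * (s ^ 2 * Real.exp (-(t/2 * s))) := by
            rw [show -(t*((1+s)/2)) = -(t/2) + -(t/2*s) by ring, Real.exp_add]; ring
  calc K2 t ≤ t * (Real.exp (-(t/2)) * (2 / (t/2) ^ 3)) :=
        mul_le_mul_of_nonneg_left hI ht.le
    _ = 16 * t⁻¹ ^ 2 * Real.exp (-(t / 2)) := by
        field_simp; ring

lemma radial_bound {ℓ : ℝ} (hℓ : 0 < ℓ) :
    (∫⁻ z : E3, ENNReal.ofReal (if ℓ < ‖z‖ then ‖z‖⁻¹ ^ 4 else 0))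
      ≤ ENNReal.ofReal (16 * ℓ⁻¹) * volume (ball (0:E3) 1) := by
  set B := volume (ball (0:E3) 1)
  set f : E3 → ℝ≥0∞ := fun z => ENNReal.ofReal (‖z‖⁻¹ ^ 4) with hf
  set S : Set E3 := {z | ℓ < ‖z‖} with hS
  have hSm : MeasurableSet S := measurableSet_lt measurable_const measurable_norm
  have h1 : (∫⁻ z : E3, ENNReal.ofReal (if ℓ < ‖z‖ then ‖z‖⁻¹ ^ 4 else 0))
      = ∫⁻ z in S, f z := by
    rw [← lintegral_indicator hSm]
    congr 1; ext z
    by_cases h : ℓ < ‖z‖ <;> simp [h, hS, indicator, f]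
  rw [h1]
  set A : ℕ → Set E3 := fun k => closedBall 0 (2^(k+1) * ℓ) \ ball 0 (2^k * ℓ) with hA
  have hcover : S ⊆ ⋃ k, A k := by
    intro z hz
    have hz' : ℓ < ‖z‖ := hz
    set t := ‖z‖ / ℓ with htdef
    have ht1 : 1 ≤ t := by rw [le_div_iff₀ hℓ]; linarith
    have hfl : 1 ≤ ⌊t⌋₊ := Nat.le_floor (by exact_mod_cast ht1)
    set k := Nat.log 2 ⌊t⌋₊ with hk
    refine mem_iUnion.2 ⟨k, ?_⟩
    simp only [A, mem_diff, mem_closedBall, mem_ball, dist_zero_right, not_lt]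
    constructor
    · -- ‖z‖ ≤ 2^(k+1) ℓ
      have h2 : ⌊t⌋₊ < 2 ^ (k+1) := Nat.lt_pow_succ_log_self one_lt_two _
      have h3 : t < ⌊t⌋₊ + 1 := Nat.lt_floor_add_one t
      have h4 : (⌊t⌋₊ : ℝ) + 1 ≤ (2:ℝ) ^ (k+1) := by
        exact_mod_cast Nat.succ_le_of_lt h2
      have : t ≤ 2 ^ (k+1) := by linarith
      calc ‖z‖ = t * ℓ := by rw [htdef, div_mul_cancel₀ _ hℓ.ne']
        _ ≤ 2^(k+1) * ℓ := by nlinarith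
    · -- ‖z‖ ∉ ball (2^k ℓ)
      have h2 : (2:ℝ) ^ k ≤ ⌊t⌋₊ := by
        exact_mod_cast Nat.pow_log_le_self 2 (by omega)
      have h3 : (⌊t⌋₊:ℝ) ≤ t := Nat.floor_le (by linarith)
      calc (2:ℝ)^k * ℓ ≤ t * ℓ := by nlinarith
        _ = ‖z‖ := by rw [htdef, div_mul_cancel₀ _ hℓ.ne']
  calc (∫⁻ z in S, f z) ≤ ∫⁻ z in ⋃ k, A k, f z :=
        lintegral_mono_set hcover
    _ ≤ ∑' k, ∫⁻ z in A k, f z := lintegral_iUnion_le _ _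
    _ ≤ ∑' k, ENNReal.ofReal (8 * ℓ⁻¹ * (2⁻¹)^k) * B := by
        refine ENNReal.tsum_le_tsum fun k => ?_
        have hb : (0:ℝ) < 2^k * ℓ := by positivity
        calc (∫⁻ z in A k, f z)
            ≤ ∫⁻ _ in A k, ENNReal.ofReal ((2^k * ℓ)⁻¹ ^ 4) := by
              refine setLIntegral_mono' (hA ▸ (measurableSet_closedBall.diff measurableSet_ball)) fun z hz => ?_
              apply ENNReal.ofReal_le_ofReal
              have : 2^k * ℓ ≤ ‖z‖ := by
                have := hz.2; simpa [mem_ball, dist_zero_right, not_lt] using this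
              gcongr
          _ = ENNReal.ofReal ((2^k * ℓ)⁻¹ ^ 4) * volume (A k) := by
              rw [setLIntegral_const]
          _ ≤ ENNReal.ofReal ((2^k * ℓ)⁻¹ ^ 4) * (ENNReal.ofReal ((2^(k+1) * ℓ) ^ 3) * B) := by
              gcongr
              have hvol : volume (A k) ≤ volume (closedBall (0:E3) (2^(k+1) * ℓ)) :=
                measure_mono diff_subset
              refine hvol.trans_eq ?_
              rw [Measure.addHaar_closedBall _ _ (by positivity)]
              congr 1
              · norm_num [finrank_euclideanSpace_fin]
          _ = ENNReal.ofReal (8 * ℓ⁻¹ * (2⁻¹)^k) * B := by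
              rw [← mul_assoc, ← ENNReal.ofReal_mul (by positivity)]
              congr 2
              have h2k : ((2:ℝ)^k) ≠ 0 := by positivity
              simp only [inv_pow]
              field_simp
              ring
    _ = ENNReal.ofReal (16 * ℓ⁻¹) * B := by
        rw [ENNReal.tsum_mul_right]
        congr 1
        have : ∀ k : ℕ, ENNReal.ofReal (8 * ℓ⁻¹ * (2⁻¹)^k)
            = ENNReal.ofReal (8 * ℓ⁻¹) * (2⁻¹)^k := by
          intro k
          rw [ENNReal.ofReal_mul (by positivity), ENNReal.ofReal_pow (by norm_num)]
          congr
          rw [ENNReal.ofReal_inv_of_pos (by norm_num)]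
          norm_num
        simp_rw [this]
        rw [ENNReal.tsum_mul_left, ENNReal.tsum_geometric]
        rw [show (1 - 2⁻¹ : ℝ≥0∞) = 2⁻¹ by
          rw [ENNReal.sub_eq_of_eq_add (by norm_num)]; rw [ENNReal.inv_two_add_inv_two]]
        rw [inv_inv, ← ENNReal.ofReal_ofNat 2, ← ENNReal.ofReal_mul (by positivity)]
        congr 1
        ring


lemma K2_meas : Measurable K2 := by
  have hc : Continuous fun p : ℝ × ℝ => Real.exp (-(p.1 * Real.sqrt (p.2 ^ 2 + 1))) * p.2 ^ 2 := by
    fun_prop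
  have := (hc.stronglyMeasurable.integral_prod_right' (ν := volume.restrict (Ioi 0)))
  exact measurable_id.mul this.measurable

lemma K2_sq_le {m ℓ r : ℝ} (hm : 0 < m) (hℓ : 0 < ℓ) (hr : ℓ < r) :
    K2 (m * r) ^ 2 ≤ 256 * m⁻¹ ^ 4 * Real.exp (-(m * ℓ)) * r⁻¹ ^ 4 := by
  have hr0 : 0 < r := hℓ.trans hr
  have hmr : 0 < m * r := by positivity
  have h0 : 0 ≤ K2 (m * r) := K2_nonneg hmr
  have h1 := K2_le hmr
  have hexp : Real.exp (-(m * r / 2)) ^ 2 = Real.exp (-(m * r)) := by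
    rw [sq, ← Real.exp_add]; ring_nf
  calc K2 (m * r) ^ 2 ≤ (16 * (m * r)⁻¹ ^ 2 * Real.exp (-(m * r / 2))) ^ 2 :=
        pow_le_pow_left₀ h0 h1 2
    _ = 256 * (m⁻¹ ^ 4 * r⁻¹ ^ 4) * Real.exp (-(m * r)) := by
        rw [mul_pow, mul_pow, hexp, mul_inv]; ring
    _ ≤ 256 * (m⁻¹ ^ 4 * r⁻¹ ^ 4) * Real.exp (-(m * ℓ)) := by
        gcongr
    _ = 256 * m⁻¹ ^ 4 * Real.exp (-(m * ℓ)) * r⁻¹ ^ 4 := by ring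

end Aux

/-- Localisation error trace estimate: for every `m, ℓ > 0` and every measurable
`Ω ⊆ ℝ³` of finite measure,
`∫_{Ωᶜ} ∫_Ω 1_{|x−y|>ℓ} K₂(m|x−y|)² dy dx ≤ C m⁻⁴ ℓ⁻¹ e^{−mℓ} |Ω|`. -/
theorem localisation_error_trace_estimate :
    ∃ C : ℝ, 0 < C ∧ ∀ (m ℓ : ℝ), 0 < m → 0 < ℓ →
      ∀ Ω : Set (EuclideanSpace ℝ (Fin 3)), MeasurableSet Ω → volume Ω < ⊤ →
        (∫ x in Ωᶜ, ∫ y in Ω, (if ℓ < ‖x - y‖ then K2 (m * ‖x - y‖) ^ 2 else 0))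
          ≤ C * m⁻¹ ^ 4 * ℓ⁻¹ * Real.exp (-(m * ℓ)) * (volume Ω).toReal := by
  classical
  set E := EuclideanSpace ℝ (Fin 3)
  set B := volume (Metric.ball (0 : EuclideanSpace ℝ (Fin 3)) 1) with hBdef
  have hBfin : B ≠ ⊤ := measure_ball_lt_top.ne
  have hBpos : 0 < B := Metric.measure_ball_pos _ _ one_pos
  have hBr : 0 < B.toReal := ENNReal.toReal_pos hBpos.ne' hBfin
  refine ⟨4096 * B.toReal, by positivity, fun m ℓ hm hℓ Ω hΩ hΩfin => ?_⟩
  haveI : Fact (volume Ω < ⊤) := ⟨hΩfin⟩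
  set g : EuclideanSpace ℝ (Fin 3) → EuclideanSpace ℝ (Fin 3) → ℝ :=
    fun x y => if ℓ < ‖x - y‖ then K2 (m * ‖x - y‖) ^ 2 else 0 with hgdef
  have hgm : Measurable (fun p : EuclideanSpace ℝ (Fin 3) × EuclideanSpace ℝ (Fin 3) => g p.1 p.2) := by
    have hn : Measurable fun p : EuclideanSpace ℝ (Fin 3) × EuclideanSpace ℝ (Fin 3) => ‖p.1 - p.2‖ :=
      (measurable_fst.sub measurable_snd).norm
    exact Measurable.ite (measurableSet_lt measurable_const hn)
      ((K2_meas.comp (measurable_const.mul hn)).pow_const 2) measurable_const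
  have hgnn : ∀ x y, 0 ≤ g x y := by
    intro x y; simp only [hgdef]; split
    · exact sq_nonneg _
    · exact le_rfl
  set U : EuclideanSpace ℝ (Fin 3) → ℝ≥0∞ :=
    fun z => ENNReal.ofReal (if ℓ < ‖z‖ then ‖z‖⁻¹ ^ 4 else 0) with hUdef
  have hUm : Measurable U :=
    (Measurable.ite (measurableSet_lt measurable_const measurable_norm)
      (measurable_norm.inv.pow_const 4) measurable_const).ennreal_ofReal
  set c₁ : ℝ≥0∞ := ENNReal.ofReal (256 * m⁻¹ ^ 4 * Real.exp (-(m * ℓ))) with hc₁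
  have hgU : ∀ x y, ENNReal.ofReal (g x y) ≤ c₁ * U (x - y) := by
    intro x y
    simp only [hgdef, hUdef]
    by_cases h : ℓ < ‖x - y‖
    · simp only [h, if_true]
      rw [← ENNReal.ofReal_mul (by positivity)]
      exact ENNReal.ofReal_le_ofReal (K2_sq_le hm hℓ h)
    · simp [h]
  -- measurability of inner integrals
  have hgx : ∀ x, AEStronglyMeasurable (g x) (volume.restrict Ω) := fun x =>
    (hgm.comp (measurable_prodMk_left)).aestronglyMeasurable
  set F : EuclideanSpace ℝ (Fin 3) → ℝ := fun x => ∫ y in Ω, g x y with hFdef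
  have hFnn : ∀ x, 0 ≤ F x := fun x => integral_nonneg (hgnn x)
  have hFm : AEStronglyMeasurable F (volume.restrict Ωᶜ) :=
    (hgm.stronglyMeasurable.integral_prod_right' (ν := volume.restrict Ω)).aestronglyMeasurable
  have hstep1 : (∫ x in Ωᶜ, F x)
      = (∫⁻ x in Ωᶜ, ENNReal.ofReal (F x)).toReal := by
    rw [integral_eq_lintegral_of_nonneg_ae (Filter.Eventually.of_forall hFnn) hFm]
  set L : ℝ≥0∞ := ∫⁻ x in Ωᶜ, ∫⁻ y in Ω, ENNReal.ofReal (g x y) with hLdef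
  have hstep2 : (∫⁻ x in Ωᶜ, ENNReal.ofReal (F x)) ≤ L := by
    refine lintegral_mono fun x => ?_
    simp only [hFdef]
    rw [integral_eq_lintegral_of_nonneg_ae (Filter.Eventually.of_forall (hgnn x)) (hgx x)]
    exact ENNReal.ofReal_toReal_le
  -- bound L
  have hUsm : Measurable fun p : EuclideanSpace ℝ (Fin 3) × EuclideanSpace ℝ (Fin 3) => U (p.1 - p.2) :=
    hUm.comp (measurable_fst.sub measurable_snd)
  have hLbound : L ≤ c₁ * ((∫⁻ z, U z) * volume Ω) := by
    calc L ≤ ∫⁻ x in Ωᶜ, ∫⁻ y in Ω, c₁ * U (x - y) :=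
          lintegral_mono fun x => lintegral_mono fun y => hgU x y
      _ = c₁ * ∫⁻ x in Ωᶜ, ∫⁻ y in Ω, U (x - y) := by
          simp_rw [lintegral_const_mul' c₁ _ (hc₁ ▸ ENNReal.ofReal_ne_top)]
      _ ≤ c₁ * ∫⁻ x, ∫⁻ y in Ω, U (x - y) :=
          mul_le_mul_right (setLIntegral_le_lintegral _ _) _
      _ = c₁ * ∫⁻ y in Ω, ∫⁻ x, U (x - y) := by
          rw [lintegral_lintegral_swap hUsm.aemeasurable]
      _ = c₁ * ∫⁻ y in Ω, ∫⁻ z, U z := by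
          congr 1
          refine lintegral_congr fun y => ?_
          exact lintegral_sub_right_eq_self U y
      _ = c₁ * ((∫⁻ z, U z) * volume Ω) := by
          rw [setLIntegral_const]
  have hradial := radial_bound hℓ
  set D : ℝ := 4096 * B.toReal * m⁻¹ ^ 4 * ℓ⁻¹ * Real.exp (-(m * ℓ)) with hDdef
  have hDnn : 0 ≤ D := by positivity
  have hle : L ≤ ENNReal.ofReal D * volume Ω := by
    refine hLbound.trans ?_
    calc c₁ * ((∫⁻ z, U z) * volume Ω)
        ≤ c₁ * ((ENNReal.ofReal (16 * ℓ⁻¹) * B) * volume Ω) := by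
          gcongr
      _ = ENNReal.ofReal D * volume Ω := by
          rw [← ENNReal.ofReal_toReal hBfin, ← mul_assoc, ← mul_assoc, hc₁,
            ← ENNReal.ofReal_mul (by positivity), ← ENNReal.ofReal_mul (by positivity)]
          congr 2
          rw [hDdef]
          ring
  have hgoal : (∫ x in Ωᶜ, ∫ y in Ω, (if ℓ < ‖x - y‖ then K2 (m * ‖x - y‖) ^ 2 else 0))
      = ∫ x in Ωᶜ, F x := rfl
  rw [hgoal, hstep1]
  have hTfin : ENNReal.ofReal D * volume Ω ≠ ⊤ :=
    ENNReal.mul_ne_top ENNReal.ofReal_ne_top hΩfin.ne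
  calc (∫⁻ x in Ωᶜ, ENNReal.ofReal (F x)).toReal
      ≤ (ENNReal.ofReal D * volume Ω).toReal :=
        ENNReal.toReal_mono hTfin (hstep2.trans hle)
    _ = D * (volume Ω).toReal := by
        rw [ENNReal.toReal_mul, ENNReal.toReal_ofReal hDnn]
    _ = 4096 * B.toReal * m⁻¹ ^ 4 * ℓ⁻¹ * Real.exp (-(m * ℓ)) * (volume Ω).toReal := by
        rw [hDdef]
end

section
/- Comparison of relativistic and non-relativistic semi-classical integrands: There exists a constant C > 0 such that for all β > 0 and all a > 0, b > 0: ∫_{ℝ³} |[½|q|² − a]_- − [√(β^{-1}|q|² + β^{-2}) − β^{-1} − a − b]_-| dq ≤ C β (β(a+b)² + 2(a+b))^{7/2} + C b (β(a+b)² + 2(a+b))^{3/2}. -/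
open MeasureTheory Metric

lemma min_zero_lip (x y : ℝ) : |min x 0 - min y 0| ≤ |x - y| := by
  rcases le_total x 0 with hx | hx <;> rcases le_total y 0 with hy | hy <;>
    simp [min_eq_left, min_eq_right, hx, hy, abs_le] <;>
    rcases abs_cases (x - y) with ⟨h1, h2⟩ | ⟨h1, h2⟩ <;> constructor <;> linarith

lemma key2 (β t : ℝ) (hβ : 0 < β) (ht : 0 ≤ t) :
    0 ≤ t/2 - (Real.sqrt (t/β + 1/β^2) - 1/β) ∧
    t/2 - (Real.sqrt (t/β + 1/β^2) - 1/β) ≤ β*t^2/8 := by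
  set s := Real.sqrt (β*t+1) with hsdef
  have hs2 : s^2 = β*t+1 := Real.sq_sqrt (by positivity)
  have hs0 : 0 ≤ s := Real.sqrt_nonneg _
  have hs1 : 1 ≤ s := by nlinarith
  have hrw : Real.sqrt (t/β + 1/β^2) = s/β := by
    have : t/β + 1/β^2 = (s/β)^2 := by
      field_simp
      rw [hs2]; ring
    rw [this, Real.sqrt_sq (by positivity)]
  have hup : s ≤ 1 + β*t/2 := by nlinarith [sq_nonneg (s - 1 - β*t/2)]
  have hlo : 1 + β*t/2 - β^2*t^2/8 ≤ s := by
    nlinarith [mul_nonneg (mul_nonneg (sub_nonneg.2 hs1) (sub_nonneg.2 hs1))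
      (mul_nonneg (sub_nonneg.2 hs1) (by linarith : (0:ℝ) ≤ s + 3))]
  rw [hrw]
  constructor
  · have := (div_le_div_iff_of_pos_right hβ).2 hup
    rw [add_div] at this
    have h2 : β*t/2/β = t/2 := by field_simp
    rw [h2] at this
    linarith
  · have := (div_le_div_iff_of_pos_right hβ).2 hlo
    have h2 : (1 + β*t/2 - β^2*t^2/8)/β = 1/β + t/2 - β*t^2/8 := by field_simp
    rw [h2] at this
    linarith

/-- Comparison of the relativistic and non-relativistic semi-classical integrands:
`∫_{ℝ³} |[½|q|² − a]_- − [√(β⁻¹|q|² + β⁻²) − β⁻¹ − a − b]_-| dq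
  ≤ C β (β(a+b)² + 2(a+b))^{7/2} + C b (β(a+b)² + 2(a+b))^{3/2}`. -/
theorem semiclassical_integrand_comparison :
    ∃ C : ℝ, 0 < C ∧ ∀ β a b : ℝ, 0 < β → 0 < a → 0 < b →
      ∫ q : EuclideanSpace ℝ (Fin 3),
          |min (‖q‖ ^ 2 / 2 - a) 0
            - min (Real.sqrt (‖q‖ ^ 2 / β + 1 / β ^ 2) - 1 / β - a - b) 0|
        ≤ C * β * (β * (a + b) ^ 2 + 2 * (a + b)) ^ ((7 : ℝ) / 2)
          + C * b * (β * (a + b) ^ 2 + 2 * (a + b)) ^ ((3 : ℝ) / 2) := by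
  set V : ℝ := (volume (ball (0 : EuclideanSpace ℝ (Fin 3)) 1)).toReal with hV
  have hV0 : 0 ≤ V := ENNReal.toReal_nonneg
  refine ⟨V + 1, by linarith, ?_⟩
  intro β a b hβ ha hb
  set E := a + b with hE
  have hE0 : 0 < E := by positivity
  set S := β * E ^ 2 + 2 * E with hS
  have hS0 : 0 < S := by positivity
  set R := Real.sqrt S with hR
  have hR0 : 0 < R := Real.sqrt_pos.2 hS0
  have hR2 : R ^ 2 = S := Real.sq_sqrt hS0.le
  set c : ℝ := β * R ^ 4 / 8 + b with hc
  have hc0 : 0 ≤ c := by positivity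
  -- pointwise bound
  have hpt : ∀ q : EuclideanSpace ℝ (Fin 3),
      |min (‖q‖ ^ 2 / 2 - a) 0
        - min (Real.sqrt (‖q‖ ^ 2 / β + 1 / β ^ 2) - 1 / β - a - b) 0|
      ≤ (closedBall (0 : EuclideanSpace ℝ (Fin 3)) R).indicator (fun _ => c) q := by
    intro q
    set t := ‖q‖ ^ 2 with htdef
    have ht0 : 0 ≤ t := by positivity
    obtain ⟨hk1, hk2⟩ := key2 β t hβ ht0
    by_cases hq : q ∈ closedBall (0 : EuclideanSpace ℝ (Fin 3)) R
    · rw [Set.indicator_of_mem hq]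
      have hqR : ‖q‖ ≤ R := mem_closedBall_zero_iff.1 hq
      have htR : t ≤ R ^ 2 := by
        rw [htdef]; exact pow_le_pow_left₀ (norm_nonneg q) hqR 2
      have ht2 : t ^ 2 ≤ R ^ 4 := by nlinarith
      calc |min (t / 2 - a) 0 - min (Real.sqrt (t / β + 1 / β ^ 2) - 1 / β - a - b) 0|
          ≤ |(t / 2 - a) - (Real.sqrt (t / β + 1 / β ^ 2) - 1 / β - a - b)| :=
            min_zero_lip _ _
        _ ≤ c := by
            rw [abs_le]
            constructor <;> [nlinarith; nlinarith]
    · rw [Set.indicator_of_notMem hq]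
      have hqR : R ≤ ‖q‖ := le_of_lt (by simpa [mem_closedBall_zero_iff] using hq)
      have htR : S ≤ t := by
        rw [← hR2, htdef]; exact pow_le_pow_left₀ hR0.le hqR 2
      have h1 : min (t / 2 - a) 0 = 0 := by
        rw [min_eq_right]
        have : 2 * a ≤ S := by nlinarith
        linarith
      have h2 : min (Real.sqrt (t / β + 1 / β ^ 2) - 1 / β - a - b) 0 = 0 := by
        rw [min_eq_right]
        have hsq : (E + 1/β)^2 ≤ t/β + 1/β^2 := by
          have h3 : (E + 1/β)^2 = S/β + 1/β^2 := by field_simp; ring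
          rw [h3]
          have h4 : S/β ≤ t/β := by gcongr
          linarith
        have h5 := Real.sqrt_le_sqrt hsq
        rw [Real.sqrt_sq (by positivity)] at h5
        linarith
      rw [h1, h2]
      simp
  have hgint : Integrable
      ((closedBall (0 : EuclideanSpace ℝ (Fin 3)) R).indicator (fun _ => c)) volume :=
    (integrableOn_const measure_closedBall_lt_top.ne).integrable_indicator
      measurableSet_closedBall
  have hint := integral_mono_of_nonneg
    (Filter.Eventually.of_forall fun q => abs_nonneg _) hgint
    (Filter.Eventually.of_forall hpt)
  rw [integral_indicator_const c measurableSet_closedBall] at hint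
  have hvol : (volume (closedBall (0 : EuclideanSpace ℝ (Fin 3)) R)).toReal = R ^ 3 * V := by
    rw [Measure.addHaar_closedBall _ _ hR0.le, ENNReal.toReal_mul,
      ENNReal.toReal_ofReal (by positivity)]
    congr 2
    simp [finrank_euclideanSpace]
  rw [measureReal_def, hvol, smul_eq_mul] at hint
  have hRrpow : ∀ n : ℕ, R ^ n = S ^ ((n : ℝ)/2) := by
    intro n
    rw [hR, Real.sqrt_eq_rpow, ← Real.rpow_natCast (S ^ ((1:ℝ)/2)) n,
      ← Real.rpow_mul hS0.le]
    congr 1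
    push_cast
    ring
  have h7 : R ^ (7:ℕ) = S ^ ((7:ℝ)/2) := by rw [hRrpow 7]; norm_num
  have h3 : R ^ (3:ℕ) = S ^ ((3:ℝ)/2) := by rw [hRrpow 3]; norm_num
  have hfin : R ^ 3 * V * c ≤ (V + 1) * β * R ^ 7 + (V + 1) * b * R ^ 3 := by
    have e1 : R ^ 3 * V * c = V * β * R ^ 7 / 8 + V * b * R ^ 3 := by rw [hc]; ring
    rw [e1]
    have p7 : 0 < R ^ 7 := pow_pos hR0 7
    have p3 : 0 < R ^ 3 := pow_pos hR0 3
    have hbr : 0 ≤ β * R ^ 7 := mul_nonneg hβ.le p7.le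
    have hbr3 : 0 ≤ b * R ^ 3 := mul_nonneg hb.le p3.le
    have h1 : V * β * R ^ 7 / 8 ≤ (V + 1) * β * R ^ 7 := by
      calc V * β * R ^ 7 / 8 = (V / 8) * (β * R ^ 7) := by ring
        _ ≤ (V + 1) * (β * R ^ 7) := mul_le_mul_of_nonneg_right (by linarith) hbr
        _ = (V + 1) * β * R ^ 7 := by ring
    have h2 : V * b * R ^ 3 ≤ (V + 1) * b * R ^ 3 := by
      calc V * b * R ^ 3 = V * (b * R ^ 3) := by ring
        _ ≤ (V + 1) * (b * R ^ 3) := mul_le_mul_of_nonneg_right (by linarith) hbr3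
        _ = (V + 1) * b * R ^ 3 := by ring
    linarith
  rw [h7, h3] at hfin
  rw [h3] at hint
  linarith
end
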